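/- Let V ∈ F^{k×n} be such that every k+d columns span F^k (d ≤ n−k). Then for all A_1, A_2 ⊆ [n] with the (k+d)-dimensional saturation property, A_1, A_2 are V-saturated, i.e., rank 𝒢_{A_1,A_2}[V] = 2k. Conversely, if for all A_1, A_2 with the (k+d)-dimensional saturation property one has rank 𝒢_{A_1,A_2}[V] = 2k, then every k+d columns of V span F^k. -/

import Mathlib

open Matrix

/-- Span of the columns of `V` indexed by the finite set `A`. -/
noncomputable def colSpan {F : Type} [Field F] {k n : ℕ} (V : Matrix (Fin k) (Fin n) F)
    (A : Finset (Fin n)) : Submodule F (Fin k → F) :=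
  Submodule.span F ((fun j => fun r => V r j) '' (A : Set (Fin n)))

/-- The block matrix `𝒢_{A_1,…,A_ℓ}[V]`. -/
def Gmat {F : Type} [Field F] {k n ℓ : ℕ} (V : Matrix (Fin k) (Fin n) F)
    (A : Fin ℓ → Finset (Fin n)) :
    Matrix (Fin ℓ × Fin k) (Fin k ⊕ (Σ i : Fin ℓ, {x // x ∈ A i})) F :=
  Matrix.of fun p c =>
    match c with
    | Sum.inl c => if p.2 = c then (1 : F) else 0
    | Sum.inr q => if p.1 = q.1 then V p.2 q.2.1 else 0

lemma colSpan_eq_top_iff {F : Type} [Field F] {k n : ℕ} (V : Matrix (Fin k) (Fin n) F)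
    (S : Finset (Fin n)) :
    colSpan V S = ⊤ ↔ ∀ y : Fin k → F, (∀ j ∈ S, ∑ r, y r * V r j = 0) → y = 0 := by
  constructor
  · intro h y hy
    let φ : (Fin k → F) →ₗ[F] F :=
      { toFun := fun v => ∑ r, y r * v r
        map_add' := by intro a b; simp [mul_add, Finset.sum_add_distrib]
        map_smul' := by intro c a; simp [Finset.mul_sum, mul_left_comm] }
    have hspan : colSpan V S ≤ LinearMap.ker φ := by
      rw [colSpan, Submodule.span_le]
      rintro v ⟨j, hj, rfl⟩
      exact hy j hj
    funext r
    have hmem : Pi.single r (1:F) ∈ colSpan V S := h ▸ Submodule.mem_top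
    have h0 : φ (Pi.single r 1) = 0 := hspan hmem
    simp only [φ, LinearMap.coe_mk, AddHom.coe_mk] at h0
    rw [Pi.zero_apply, ← h0]
    rw [Finset.sum_eq_single r]
    · simp
    · intro b _ hb; simp [Pi.single_apply, hb]
    · simp
  · intro h
    by_contra hne
    obtain ⟨φ, φ0, hker⟩ :=
      (colSpan V S).exists_le_ker_of_lt_top (lt_top_iff_ne_top.mpr hne)
    set y : Fin k → F := fun r => φ (Pi.single r 1) with hy
    have hexp : ∀ v : Fin k → F, φ v = ∑ r, y r * v r := by
      intro v
      rw [LinearMap.pi_apply_eq_sum_univ φ v]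
      refine Finset.sum_congr rfl fun r _ => ?_
      rw [smul_eq_mul, mul_comm]
      congr 2
      funext j
      simp [Pi.single_apply, eq_comm]
    have hy0 : y = 0 := by
      apply h
      intro j hj
      have hmem : (fun r => V r j) ∈ colSpan V S :=
        Submodule.subset_span ⟨j, hj, rfl⟩
      have := hker hmem
      rw [LinearMap.mem_ker, hexp] at this
      exact this
    exact φ0 (LinearMap.ext fun v => by rw [hexp, hy0]; simp)

lemma rank_Gmat_pair {F : Type} [Field F] {k n : ℕ} (V : Matrix (Fin k) (Fin n) F)
    (A₁ A₂ : Finset (Fin n)) :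
    (Gmat V ![A₁, A₂]).rank = 2 * k ↔ colSpan V (A₁ ∪ A₂) = ⊤ := by
  rw [colSpan_eq_top_iff]
  set G := Gmat V ![A₁, A₂] with hGdef
  have hGinl : ∀ (p : Fin 2 × Fin k) (c : Fin k),
      G p (Sum.inl c) = if p.2 = c then (1:F) else 0 := fun p c => rfl
  have hGinr : ∀ (p : Fin 2 × Fin k) (q : Σ i : Fin 2, {x // x ∈ (![A₁, A₂] : Fin 2 → Finset (Fin n)) i}),
      G p (Sum.inr q) = if p.1 = q.1 then V p.2 q.2.1 else 0 := fun p q => rfl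
  have hcard : Fintype.card (Fin 2 × Fin k) = 2 * k := by simp
  have hrank : G.rank = 2 * k ↔ LinearIndependent F (fun p => G p) := by
    rw [Matrix.rank_eq_finrank_span_row, linearIndependent_iff_card_eq_finrank_span, hcard,
      Set.finrank, eq_comm]
    exact Iff.rfl
  rw [hrank, Fintype.linearIndependent_iff]
  have keyinl : ∀ (g : Fin 2 × Fin k → F) (c : Fin k),
      (∑ p : Fin 2 × Fin k, g p • G p) (Sum.inl c) = g (0, c) + g (1, c) := by
    intro g c
    simp only [Finset.sum_apply, Pi.smul_apply, smul_eq_mul, hGinl]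
    rw [Fintype.sum_prod_type, Fin.sum_univ_two]
    congr 1 <;>
    · rw [Finset.sum_eq_single c]
      · simp
      · intro b _ hb; simp [hb]
      · simp
  have keyinr : ∀ (g : Fin 2 × Fin k → F) (i : Fin 2) (j : Fin n)
      (hj : j ∈ (![A₁, A₂] : Fin 2 → Finset (Fin n)) i),
      (∑ p : Fin 2 × Fin k, g p • G p) (Sum.inr ⟨i, ⟨j, hj⟩⟩) = ∑ r, g (i, r) * V r j := by
    intro g i j hj
    simp only [Finset.sum_apply, Pi.smul_apply, smul_eq_mul, hGinr]
    rw [Fintype.sum_prod_type]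
    rw [Finset.sum_eq_single i]
    · simp
    · intro b _ hb; simp [hb]
    · simp
  constructor
  · intro H y hy
    set g : Fin 2 × Fin k → F := fun p => if p.1 = 0 then y p.2 else -y p.2 with hg
    have hgi : ∀ (i : Fin 2) (r : Fin k), g (i, r) = (if i = 0 then 1 else -1) * y r := by
      intro i r
      by_cases hi : i = 0 <;> simp [g, hi]
    have h0 : ∑ p : Fin 2 × Fin k, g p • G p = 0 := by
      funext c
      match c with
      | Sum.inl c =>
        rw [Pi.zero_apply, keyinl g c, hgi, hgi]
        simp
      | Sum.inr ⟨i, ⟨j, hj⟩⟩ =>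
        have hjU : j ∈ A₁ ∪ A₂ := by
          rcases Fin.exists_fin_two.mp ⟨i, rfl⟩ with hi | hi
          · exact Finset.mem_union_left _ (by rw [hi] at hj; simpa using hj)
          · exact Finset.mem_union_right _ (by rw [hi] at hj; simpa using hj)
        rw [Pi.zero_apply, keyinr g i j hj]
        calc ∑ r, g (i, r) * V r j
            = (if i = 0 then 1 else -1) * ∑ r, y r * V r j := by
              rw [Finset.mul_sum]
              exact Finset.sum_congr rfl fun r _ => by rw [hgi]; ring
          _ = 0 := by rw [hy j hjU, mul_zero]
    funext r
    simpa [g] using H g h0 (0, r)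
  · intro H g hg0
    have hsum : ∀ c : Fin k, g (0, c) + g (1, c) = 0 := by
      intro c; rw [← keyinl g c, hg0]; rfl
    set y : Fin k → F := fun r => g (0, r) with hy
    have hy0 : y = 0 := by
      apply H
      intro j hj
      rcases Finset.mem_union.mp hj with hj1 | hj2
      · have h1 : j ∈ (![A₁, A₂] : Fin 2 → Finset (Fin n)) 0 := by simpa using hj1
        have := keyinr g 0 j h1
        rw [hg0] at this
        simpa [y] using this.symm
      · have h2 : j ∈ (![A₁, A₂] : Fin 2 → Finset (Fin n)) 1 := by simpa using hj2
        have := keyinr g 1 j h2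
        rw [hg0] at this
        have h3 : ∑ r, g (1, r) * V r j = 0 := by simpa using this.symm
        have h4 : ∀ r, g (1, r) = -y r := fun r => by
          have h := hsum r
          simp only [y]
          linear_combination h
        calc ∑ r, y r * V r j = -∑ r, g (1, r) * V r j := by
              rw [← Finset.sum_neg_distrib]
              refine Finset.sum_congr rfl fun r _ => ?_
              rw [h4 r]; ring
          _ = 0 := by rw [h3, neg_zero]
    rintro ⟨i, r⟩
    have hyr : g (0, r) = 0 := congrFun hy0 r
    rcases Fin.exists_fin_two.mp ⟨i, rfl⟩ with hi | hi <;> subst hi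
    · exact hyr
    · have := hsum r
      rw [hyr, zero_add] at this
      exact this

/-- Every `k + d` columns of `V` span `F^k` iff for all `A₁, A₂ ⊆ [n]` with the
`(k+d)`-dimensional saturation property (combinatorially: `|A₁ ∪ A₂| ≥ k + d`),
`A₁, A₂` are `V`-saturated, i.e. `rank 𝒢_{A₁,A₂}[V] = 2k`. -/
theorem span_iff_pair_saturated {F : Type} [Field F] {k n d : ℕ}
    (hk : k ≤ n) (hd : d ≤ n - k) (V : Matrix (Fin k) (Fin n) F) :
    (∀ A : Finset (Fin n), A.card = k + d → colSpan V A = ⊤) ↔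
      (∀ A₁ A₂ : Finset (Fin n), k + d ≤ (A₁ ∪ A₂).card →
        (Gmat V ![A₁, A₂]).rank = 2 * k) := by
  constructor
  · intro h A₁ A₂ hcard
    rw [rank_Gmat_pair]
    obtain ⟨B, hBsub, hBcard⟩ := Finset.exists_subset_card_eq hcard
    have hB : colSpan V B = ⊤ := h B hBcard
    have hle : colSpan V B ≤ colSpan V (A₁ ∪ A₂) :=
      Submodule.span_mono (Set.image_mono (by exact_mod_cast hBsub))
    exact top_le_iff.mp (hB ▸ hle)
  · intro h A hA
    have := h A A (by rw [Finset.union_self, hA])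
    rw [rank_Gmat_pair, Finset.union_self] at this
    exact this
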